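/- Let v₁, …, v_k be n-dimensional vectors over the two-element field F₂ that are linearly independent over F₂. Then the vectors in ℂ^n obtained by interpreting the components 0_{F₂} and 1_{F₂} of each v_i as the complex scalars 0 and 1 are linearly independent over ℂ. -/

import Mathlib

open scoped Matrix


noncomputable def liftVecQ {n : ℕ} (v : Fin n → ZMod 2) : Fin n → ℚ :=
  fun i => if v i = 0 then 0 else 1

lemma intIndep {n k : ℕ} (v : Fin k → (Fin n → ZMod 2))
    (hindep : LinearIndependent (ZMod 2) v) :
    ∀ (g : Fin k → ℤ), (∑ i, g i • liftVecQ (v i)) = 0 → ∀ i, g i = 0 := by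
  suffices H : ∀ N : ℕ, ∀ g : Fin k → ℤ, (∑ i, (g i).natAbs) = N →
      (∑ i, g i • liftVecQ (v i)) = 0 → ∀ i, g i = 0 by
    intro g; exact H _ g rfl
  intro N
  induction N using Nat.strong_induction_on with
  | _ N ih =>
    intro g hN hrel
    by_cases h0 : ∀ i, g i = 0
    · exact h0
    -- all g i are even, using F₂-independence
    have heven : ∀ i, (2 : ℤ) ∣ g i := by
      have hz : ∑ i, (g i : ZMod 2) • v i = 0 := by
        funext j
        have hj := congrFun hrel j
        simp only [Finset.sum_apply, Pi.smul_apply, Pi.zero_apply, liftVecQ,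
          zsmul_eq_mul] at hj
        have hcast : ∀ i : Fin k, (((if v i j = 0 then (0:ℤ) else 1) : ℤ) : ℚ)
            = (if v i j = 0 then (0:ℚ) else 1) := by
          intro i; split <;> simp
        have hint : ∑ i, g i * (if v i j = 0 then (0:ℤ) else 1) = 0 := by
          have h2 : ((∑ i, g i * (if v i j = 0 then (0:ℤ) else 1) : ℤ) : ℚ) = 0 := by
            push_cast [hcast]
            convert hj
            simp [liftVecQ]
          exact_mod_cast h2
        have h2 := congrArg (fun z : ℤ => (z : ZMod 2)) hint
        have htwo : ∀ a : ZMod 2, a = 0 ∨ a = 1 := by decide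
        push_cast at h2
        simp only [Finset.sum_apply, Pi.smul_apply, Pi.zero_apply, smul_eq_mul]
        rw [← h2]
        refine Finset.sum_congr rfl fun i _ => ?_
        rcases htwo (v i j) with h | h <;> simp [h]
      intro i
      have h3 := Fintype.linearIndependent_iff.mp hindep (fun i => (g i : ZMod 2)) hz i
      rwa [ZMod.intCast_zmod_eq_zero_iff_dvd] at h3
    -- divide by 2 and use induction
    set g' : Fin k → ℤ := fun i => g i / 2 with hg'
    have hgg : ∀ i, g i = 2 * g' i := fun i => (Int.mul_ediv_cancel' (heven i)).symm
    have hrel' : ∑ i, g' i • liftVecQ (v i) = 0 := by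
      have : (2 : ℤ) • (∑ i, g' i • liftVecQ (v i)) = 0 := by
        rw [Finset.smul_sum]
        rw [← hrel]
        refine Finset.sum_congr rfl fun i _ => ?_
        rw [smul_smul, ← hgg i]
      rcases smul_eq_zero.mp this with h | h
      · exact absurd h (by norm_num)
      · exact h
    have hNpos : N ≠ 0 := by
      intro hN0
      apply h0
      intro i
      have : (g i).natAbs = 0 := by
        have := Finset.sum_eq_zero_iff.mp (hN.trans hN0) i (Finset.mem_univ i)
        exact this
      omega
    have hsum' : ∑ i, (g' i).natAbs = N / 2 := by
      have : ∑ i, (g i).natAbs = 2 * ∑ i, (g' i).natAbs := by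
        rw [Finset.mul_sum]
        refine Finset.sum_congr rfl fun i _ => ?_
        rw [hgg i]; simp [Int.natAbs_mul]
      omega
    have hlt : N / 2 < N := Nat.div_lt_self (Nat.pos_of_ne_zero hNpos) one_lt_two
    have := ih (N / 2) hlt g' hsum' hrel'
    intro i
    rw [hgg i, this i, mul_zero]

lemma qIndep {n k : ℕ} (v : Fin k → (Fin n → ZMod 2))
    (hindep : LinearIndependent (ZMod 2) v) :
    LinearIndependent ℚ (fun i => liftVecQ (v i)) := by
  rw [← LinearIndependent.iff_fractionRing ℤ ℚ]
  exact Fintype.linearIndependent_iff.mpr (intIndep v hindep)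


/-- Lift of a vector over `F₂ = ZMod 2` to a complex vector, sending `0 ↦ 0` and `1 ↦ 1`. -/
noncomputable def liftVecC {n : ℕ} (v : Fin n → ZMod 2) : Fin n → ℂ :=
  fun i => if v i = 0 then 0 else 1

/-- vectors over `F₂` that are linearly independent over `F₂` remain linearly
independent over `ℂ` when their `0`/`1` components are interpreted as complex scalars. -/
theorem stmt2 {n k : ℕ} (v : Fin k → (Fin n → ZMod 2))
    (hindep : LinearIndependent (ZMod 2) v) :
    LinearIndependent ℂ (fun i => liftVecC (v i)) := by
  classical
  set A : Matrix (Fin k) (Fin n) ℚ := Matrix.of (fun i => liftVecQ (v i)) with hAdef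
  have hA : LinearIndependent ℚ (fun i => A i) := qIndep v hindep
  have hsum : ∀ {R : Type} [Field R] {m p : ℕ} (M : Matrix (Fin m) (Fin p) R)
      (g : Fin m → R), ∑ i, g i • M i = g ᵥ* M := by
    intro R _ m p M g
    funext j
    simp [Matrix.vecMul, dotProduct, Finset.sum_apply]
  -- the Gram matrix over ℚ is invertible
  have hker : LinearMap.ker (A * Aᵀ).mulVecLin = ⊥ := by
    rw [show A * Aᵀ = (Aᵀ)ᵀ * Aᵀ by rw [Matrix.transpose_transpose],
      Matrix.ker_mulVecLin_transpose_mul_self, LinearMap.ker_eq_bot']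
    intro g hg
    have hg' : g ᵥ* A = 0 := by simpa using hg
    exact funext (Fintype.linearIndependent_iff.mp hA g (by rw [hsum A g, hg']))
  have hU : IsUnit (A * Aᵀ) := by
    rw [← Matrix.mulVec_injective_iff_isUnit]
    have := LinearMap.ker_eq_bot.mp hker
    exact this
  have hdet : (A * Aᵀ).det ≠ 0 := by
    have := (Matrix.isUnit_iff_isUnit_det _).mp hU
    exact this.ne_zero
  -- transfer to ℂ
  set f : ℚ →+* ℂ := algebraMap ℚ ℂ with hf
  set B : Matrix (Fin k) (Fin n) ℂ := A.map f with hBdef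
  have hBv : (fun i => liftVecC (v i)) = fun i => B i := by
    funext i j
    simp only [hBdef, Matrix.map_apply, hAdef, Matrix.of_apply, liftVecQ, liftVecC]
    split <;> simp
  have hGB : B * Bᵀ = (A * Aᵀ).map f := by
    rw [Matrix.map_mul, Matrix.transpose_map]
  have hdetB : (B * Bᵀ).det ≠ 0 := by
    rw [hGB]
    have hd : ((A * Aᵀ).map f).det = f ((A * Aᵀ).det) := by
      rw [show (A * Aᵀ).map f = f.mapMatrix (A * Aᵀ) from rfl, ← RingHom.map_det]
    rw [hd]
    simpa using hdet
  have hUB : IsUnit (B * Bᵀ) :=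
    (Matrix.isUnit_iff_isUnit_det _).mpr (isUnit_iff_ne_zero.mpr hdetB)
  have hinj : Function.Injective (B * Bᵀ).vecMul :=
    Matrix.vecMul_injective_iff_isUnit.mpr hUB
  rw [hBv, Fintype.linearIndependent_iff]
  intro g hg
  have h1 : g ᵥ* B = 0 := by rw [← hsum B g]; exact hg
  have h2 : g ᵥ* (B * Bᵀ) = 0 ᵥ* (B * Bᵀ) := by
    rw [← Matrix.vecMul_vecMul, h1, Matrix.zero_vecMul, Matrix.zero_vecMul]
  intro i
  exact congrFun (hinj h2) i
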